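/- Set q = p^n a prime power, let 𝒫 ⊂ F_{q²} be the set of roots of T^q + T, fix an F_p-basis (w₁, …, w_n) of 𝒫, and for 1 ≤ j < n set H_j = ⟨w₁, …, w_j⟩_{F_p} and P_j(T) = ∏_{a ∈ H_j}(T − a). Then for all 1 < j < n one has P_j(T) = P_{j−1}(T)^p − W_j · P_{j−1}(T), where W_j = P_{j−1}(w_j)^{p−1} = ∏_{a ∈ H_{j−1}}(w_j − a)^{p−1}; moreover W_j ∈ F_q (i.e. W_j^q = W_j). -/

import Mathlib

open Polynomial


lemma poly_eq_of_eval_eq {K : Type} [Field K] (s : Finset K) {f g : K[X]}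
    (hf : f.Monic) (hg : g.Monic) (hdf : f.natDegree = s.card) (hdg : g.natDegree = s.card)
    (h : ∀ a ∈ s, f.eval a = g.eval a) : f = g := by
  by_contra hne
  have hsub : f - g ≠ 0 := sub_ne_zero.mpr hne
  have hdlt : (f - g).natDegree < s.card := by
    have hd : f.degree = g.degree := by
      rw [Polynomial.degree_eq_natDegree hf.ne_zero, Polynomial.degree_eq_natDegree hg.ne_zero,
        hdf, hdg]
    have h2 := Polynomial.degree_sub_lt hd hf.ne_zero (by rw [hf.leadingCoeff, hg.leadingCoeff])
    have h3 := Polynomial.natDegree_lt_natDegree hsub h2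
    omega
  have : f - g = 0 := by
    apply Polynomial.eq_zero_of_natDegree_lt_card_of_eval_eq_zero' _ s _ hdlt
    intro a ha; simp [h a ha]
  exact hsub this

variable {K : Type} [Field K]

lemma prodlin_monic (s : Finset K) : (∏ a ∈ s, (X - C a)).Monic :=
  monic_prod_of_monic _ _ fun a _ => monic_X_sub_C a

lemma prodlin_deg (s : Finset K) : (∏ a ∈ s, (X - C a)).natDegree = s.card := by
  rw [Polynomial.natDegree_prod _ _ (fun a _ => X_sub_C_ne_zero a)]
  simp

lemma prodlin_eval (s : Finset K) (x : K) :
    (∏ a ∈ s, (X - C a)).eval x = ∏ a ∈ s, (x - a) := by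
  simp [eval_prod]

lemma prodlin_root (s : Finset K) {a : K} (ha : a ∈ s) :
    (∏ a ∈ s, (X - C a)).eval a = 0 := by
  rw [prodlin_eval]
  exact Finset.prod_eq_zero ha (sub_self a)

section grp
variable (s : Finset K) (h0 : (0:K) ∈ s) (hcl : ∀ a ∈ s, ∀ b ∈ s, a - b ∈ s)

include h0 hcl in
lemma grp_shift {v : K} (hv : v ∈ s) (x : K) :
    (∏ a ∈ s, (X - C a)).eval (x + v) = (∏ a ∈ s, (X - C a)).eval x := by
  rw [prodlin_eval, prodlin_eval]
  refine Finset.prod_nbij' (fun a => a - v) (fun a => a + v) ?_ ?_ ?_ ?_ ?_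
  · intro a ha; exact hcl a ha v hv
  · intro a ha
    have h1 : (0:K) - a ∈ s := hcl 0 h0 a ha
    have : (0:K) - ((0:K)-a - v) ∈ s := hcl 0 h0 _ (hcl _ h1 v hv)
    simpa [add_comm] using this
  · intro a _; ring
  · intro a _; ring
  · intro a _; ring
end grp

section grp2
variable (s : Finset K) (h0 : (0:K) ∈ s) (hcl : ∀ a ∈ s, ∀ b ∈ s, a - b ∈ s)

include h0 hcl in
lemma grp_add (x y : K) :
    (∏ a ∈ s, (X - C a)).eval (x + y) =
      (∏ a ∈ s, (X - C a)).eval x + (∏ a ∈ s, (X - C a)).eval y := by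
  set f : K[X] := ∏ a ∈ s, (X - C a) with hfdef
  have hcard : 0 < s.card := Finset.card_pos.mpr ⟨0, h0⟩
  have hmon : f.Monic := prodlin_monic s
  have hcomp : (f.comp (X + C x)).Monic := hmon.comp_X_add_C x
  have hdegcomp : (f.comp (X + C x)).natDegree = s.card := by
    rw [natDegree_comp]; simp [prodlin_deg s]; exact prodlin_deg s
  set g : K[X] := f.comp (X + C x) - f - C (f.eval x) with hgdef
  have hg : g = 0 := by
    apply Polynomial.eq_zero_of_natDegree_lt_card_of_eval_eq_zero' _ s
    · intro a ha
      have h1 : f.eval (a + x) = f.eval x := by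
        rw [add_comm]; exact grp_shift s h0 hcl ha x
      simp [hgdef, eval_comp, h1, prodlin_root s ha]; exact prodlin_root s ha
    · have h1 : (f.comp (X + C x) - f).natDegree < s.card := by
        rcases eq_or_ne (f.comp (X + C x) - f) 0 with h | h
        · simpa [h] using hcard
        · have hd : (f.comp (X + C x)).degree = f.degree := by
            rw [Polynomial.degree_eq_natDegree hcomp.ne_zero,
              Polynomial.degree_eq_natDegree hmon.ne_zero, hdegcomp, prodlin_deg]
          have h2 := Polynomial.degree_sub_lt hd hcomp.ne_zero
            (by rw [hcomp.leadingCoeff, hmon.leadingCoeff])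
          have h3 := Polynomial.natDegree_lt_natDegree h h2
          rw [hdegcomp] at h3; exact h3
      calc g.natDegree ≤ max (f.comp (X + C x) - f).natDegree (C (f.eval x)).natDegree :=
            natDegree_sub_le _ _
        _ < s.card := by simpa using h1
  have := congrArg (Polynomial.eval y) hg
  simp [hgdef, eval_comp, sub_eq_zero, sub_sub, eq_comm] at this
  have h2 : eval (y + x) f = eval y f + eval x f := by linear_combination -this
  rw [add_comm x y, h2]; ring
end grp2

section grp3
variable {K : Type} [Field K]
variable (s : Finset K) (h0 : (0:K) ∈ s) (hcl : ∀ a ∈ s, ∀ b ∈ s, a - b ∈ s)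

include h0 hcl in
lemma grp_coset (c : K) :
    (∏ a ∈ s, (X - C (c + a))) = (∏ a ∈ s, (X - C a)) - C ((∏ a ∈ s, (X - C a)).eval c) := by
  classical
  set f : K[X] := ∏ a ∈ s, (X - C a) with hfdef
  have hcard : 0 < s.card := Finset.card_pos.mpr ⟨0, h0⟩
  have hmon : f.Monic := prodlin_monic s
  have hdeg : f.natDegree = s.card := prodlin_deg s
  have hdC : (C (f.eval c)).degree < f.degree := by
    apply lt_of_le_of_lt (degree_C_le)
    rw [Polynomial.degree_eq_natDegree hmon.ne_zero, hdeg]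
    exact_mod_cast hcard
  apply poly_eq_of_eval_eq (s.image (fun a => c + a))
  · exact monic_prod_of_monic _ _ fun a _ => monic_X_sub_C _
  · exact hmon.sub_of_left hdC
  · rw [Polynomial.natDegree_prod _ _ (fun a _ => X_sub_C_ne_zero _),
      Finset.card_image_of_injective _ (add_right_injective c)]
    rw [Finset.sum_congr rfl (fun x _ => natDegree_X_sub_C (c + x))]
    simp
  · rw [natDegree_sub_C, hdeg, Finset.card_image_of_injective _ (add_right_injective c)]
  · intro b hb
    obtain ⟨a, ha, rfl⟩ := Finset.mem_image.mp hb
    have hL : (∏ a' ∈ s, (X - C (c + a'))).eval (c + a) = 0 := by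
      rw [eval_prod]
      exact Finset.prod_eq_zero ha (by simp)
    rw [hL, eval_sub, eval_C, grp_add s h0 hcl, prodlin_root s ha, add_zero, sub_self]

include h0 hcl in
lemma grp_nsmul (ω : K) (m : ℕ) :
    (∏ a ∈ s, (X - C a)).eval (m • ω) = m • (∏ a ∈ s, (X - C a)).eval ω := by
  induction m with
  | zero => simpa using prodlin_root s h0
  | succ m ih =>
      rw [succ_nsmul, succ_nsmul, grp_add s h0 hcl, ih]
end grp3

lemma zmod_prodlin (p : ℕ) (hp : p.Prime) [NeZero p] {K : Type} [Field K] [CharP K p] (θ : K) :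
    (∏ c : ZMod p, (X - C ((c.val • θ : K)))) = X ^ p - C (θ ^ (p - 1)) * X := by
  classical
  haveI : Fact p.Prime := ⟨hp⟩
  have hp1 : p - 1 + 1 = p := Nat.succ_pred_eq_of_pos hp.pos
  rcases eq_or_ne θ 0 with rfl | hθ
  · have : ∀ c : ZMod p, X - C ((c.val • (0:K))) = (X : K[X]) := by intro c; simp
    rw [Finset.prod_congr rfl (fun c _ => this c), Finset.prod_const, Finset.card_univ,
      ZMod.card p]
    rw [zero_pow (by have := hp.two_le; omega), map_zero, zero_mul, sub_zero]
  · have hdX : (C (θ ^ (p-1)) * X).degree < (X ^ p : K[X]).degree := by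
      rw [degree_X_pow]
      apply lt_of_le_of_lt (degree_C_mul_X_le _)
      exact_mod_cast hp.one_lt
    have hinj : Function.Injective (fun c : ZMod p => (c.val • θ : K)) := by
      intro c₁ c₂ h
      simp only [nsmul_eq_mul] at h
      have h2 : ((c₁.val : K)) = ((c₂.val : K)) := mul_right_cancel₀ hθ h
      have h3 : c₁.val ≡ c₂.val [MOD p] := (CharP.natCast_eq_natCast K p).mp h2
      have h4 : c₁.val = c₂.val := by
        have e1 := ZMod.val_lt c₁; have e2 := ZMod.val_lt c₂
        rwa [Nat.ModEq, Nat.mod_eq_of_lt e1, Nat.mod_eq_of_lt e2] at h3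
      exact ZMod.val_injective p h4
    apply poly_eq_of_eval_eq (Finset.univ.image (fun c : ZMod p => (c.val • θ : K)))
    · exact monic_prod_of_monic _ _ fun a _ => monic_X_sub_C _
    · exact (monic_X_pow p).sub_of_left hdX
    · rw [Polynomial.natDegree_prod _ _ (fun a _ => X_sub_C_ne_zero _),
        Finset.card_image_of_injective _ hinj,
        Finset.sum_congr rfl (fun c _ => natDegree_X_sub_C _)]
      simp [ZMod.card p]
    · rw [Finset.card_image_of_injective _ hinj]
      have hdeg2 : ((X:K[X]) ^ p - C (θ ^ (p - 1)) * X).degree = (p : WithBot ℕ) := by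
        rw [Polynomial.degree_sub_eq_left_of_degree_lt hdX, degree_X_pow]
      rw [natDegree_eq_of_degree_eq_some hdeg2]
      simp [ZMod.card p]
    · intro b hb
      obtain ⟨c, _, rfl⟩ := Finset.mem_image.mp hb
      have hL : (∏ c' : ZMod p, (X - C ((c'.val • θ : K)))).eval (c.val • θ) = 0 := by
        rw [eval_prod]
        exact Finset.prod_eq_zero (Finset.mem_univ c) (by simp)
      rw [hL]
      have hfermat : ((c.val : K)) ^ p = (c.val : K) := by
        have h1 : ((c.val ^ p : ℕ) : ZMod p) = ((c.val : ℕ) : ZMod p) := by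
          push_cast
          exact ZMod.pow_card _
        have h2 : c.val ^ p ≡ c.val [MOD p] := (ZMod.natCast_eq_natCast_iff _ _ _).mp h1
        calc ((c.val : K)) ^ p = ((c.val ^ p : ℕ) : K) := by push_cast; ring
          _ = (c.val : K) := (CharP.natCast_eq_natCast K p).mpr h2
      simp only [eval_sub, eval_pow, eval_X, eval_mul, eval_C, nsmul_eq_mul]
      rw [mul_pow, hfermat]
      have hθp : θ ^ (p - 1) * θ = θ ^ p := by rw [← pow_succ, hp1]
      linear_combination (c.val : K) * hθp

lemma main_id (p : ℕ) (hp : p.Prime) {K : Type} [Field K] [Algebra (ZMod p) K]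
    (V : Submodule (ZMod p) K) (hVfin : ((V : Set K)).Finite) (ω : K) (hω : ω ∉ V)
    (hWfin : (((V ⊔ Submodule.span (ZMod p) {ω} : Submodule (ZMod p) K) : Set K)).Finite) :
    (∏ a ∈ hWfin.toFinset, (X - C a)) =
      (∏ a ∈ hVfin.toFinset, (X - C a)) ^ p
        - C (((∏ a ∈ hVfin.toFinset, (X - C a)).eval ω) ^ (p - 1))
          * (∏ a ∈ hVfin.toFinset, (X - C a)) := by
  classical
  haveI : Fact p.Prime := ⟨hp⟩
  haveI : NeZero p := ⟨hp.ne_zero⟩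
  haveI : CharP K p := charP_of_injective_algebraMap (algebraMap (ZMod p) K).injective p
  set s := hVfin.toFinset with hs
  have hmem : ∀ a : K, a ∈ s ↔ a ∈ V := fun a => Set.Finite.mem_toFinset _
  have h0 : (0:K) ∈ s := (hmem 0).mpr V.zero_mem
  have hcl : ∀ a ∈ s, ∀ b ∈ s, a - b ∈ s := fun a ha b hb =>
    (hmem _).mpr (V.sub_mem ((hmem a).mp ha) ((hmem b).mp hb))
  set f := ∏ a ∈ s, (X - C a) with hf
  set θ := f.eval ω with hθ
  have hsmul : ∀ c : ZMod p, c • ω = (c.val : ℕ) • ω := by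
    intro c
    have h1 : ((c.val : ℕ) : ZMod p) • ω = (c.val : ℕ) • ω := Nat.cast_smul_eq_nsmul _ _ _
    rwa [(ZMod.natCast_rightInverse c : ((c.val : ℕ) : ZMod p) = c)] at h1
  have hfinset : hWfin.toFinset
      = (Finset.univ ×ˢ s).image (fun ca : ZMod p × K => ca.1.val • ω + ca.2) := by
    ext x
    simp only [Finset.mem_image, Finset.mem_product, Finset.mem_univ, true_and, Prod.exists]
    rw [Set.Finite.mem_toFinset, SetLike.mem_coe, Submodule.mem_sup]
    constructor
    · rintro ⟨y, hy, z, hz, rfl⟩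
      obtain ⟨c, rfl⟩ := Submodule.mem_span_singleton.mp hz
      exact ⟨c, y, (hmem y).mpr hy, by rw [← hsmul c]; ring⟩
    · rintro ⟨c, a, ha, rfl⟩
      exact ⟨a, (hmem a).mp ha, c • ω,
        Submodule.mem_span_singleton.mpr ⟨c, rfl⟩, by rw [hsmul c]; ring⟩
  have hinj : ∀ x ∈ Finset.univ ×ˢ s, ∀ y ∈ Finset.univ ×ˢ s,
      (fun ca : ZMod p × K => ca.1.val • ω + ca.2) x
        = (fun ca : ZMod p × K => ca.1.val • ω + ca.2) y → x = y := by
    rintro ⟨c₁, a₁⟩ h₁ ⟨c₂, a₂⟩ h₂ h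
    simp only [Finset.mem_product, Finset.mem_univ, true_and] at h₁ h₂
    simp only at h
    rw [← hsmul c₁, ← hsmul c₂] at h
    have hc : c₁ = c₂ := by
      by_contra hne
      have hd : (c₁ - c₂) • ω = a₂ - a₁ := by
        rw [sub_smul]; linear_combination h
      have hmemV : (c₁ - c₂) • ω ∈ V := by
        rw [hd]; exact V.sub_mem ((hmem a₂).mp h₂) ((hmem a₁).mp h₁)
      have : ω ∈ V := by
        have := V.smul_mem (c₁ - c₂)⁻¹ hmemV
        rwa [smul_smul, inv_mul_cancel₀ (sub_ne_zero.mpr hne), one_smul] at this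
      exact hω this
    subst hc
    have : a₁ = a₂ := by
      have := h
      simpa using this
    simp [this]
  rw [hfinset, Finset.prod_image hinj, Finset.prod_product]
  have hinner : ∀ c : ZMod p, (∏ a ∈ s, (X - C (c.val • ω + a))) = f - C (c.val • θ) := by
    intro c
    rw [grp_coset s h0 hcl (c.val • ω), grp_nsmul s h0 hcl, ← hf, ← hθ]
  rw [Finset.prod_congr rfl (fun c _ => hinner c)]
  have hcomp : (∏ c : ZMod p, (f - C ((c.val : ℕ) • θ)))
      = (∏ c : ZMod p, (X - C ((c.val : ℕ) • θ))).comp f := by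
    rw [Polynomial.prod_comp]
    exact Finset.prod_congr rfl (fun c _ => by simp [sub_comp])
  rw [hcomp, zmod_prodlin p hp θ]
  simp [sub_comp, pow_comp, mul_comp]

/-- Let `q = p^n`, `𝒫 ⊆ F_{q²}` the root set of `T^q + T`,
`(w₁,…,w_n)` an `F_p`-basis of `𝒫`, `H_j = ⟨w₁,…,w_j⟩` and
`P_j(T) = ∏_{a ∈ H_j}(T - a)`. Then for all `1 < j < n` one has
`P_j(T) = P_{j-1}(T)^p - W_j · P_{j-1}(T)` where
`W_j = P_{j-1}(w_j)^{p-1} = ∏_{a ∈ H_{j-1}}(w_j - a)^{p-1}`;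
moreover `W_j ∈ F_q`, i.e. `W_j^q = W_j`. -/
theorem stmt_10
    (p n : ℕ) (hp : p.Prime) (hn : 0 < n) (q : ℕ) (hq : q = p ^ n)
    (K : Type) [Field K] [Fintype K] [Algebra (ZMod p) K]
    (hcardK : Fintype.card K = q ^ 2)
    -- `(w₁,…,w_n)` is an `F_p`-basis of the root set `𝒫` of `T^q + T`
    (w : Fin n → K) (hwroot : ∀ i, (w i) ^ q + w i = 0)
    (hwind : LinearIndependent (ZMod p) w)
    (hwspan : (Submodule.span (ZMod p) (Set.range w) : Set K) = {α : K | α ^ q + α = 0}) :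
    ∀ j : ℕ, (hj1 : 1 < j) → (hjn : j < n) →
      let Pj : Polynomial K :=
        ∏ a ∈ (Set.toFinite ((Submodule.span (ZMod p) (w '' {l : Fin n | (l : ℕ) < j}) :
          Submodule (ZMod p) K) : Set K)).toFinset, (X - C a);
      let Pj1 : Polynomial K :=
        ∏ a ∈ (Set.toFinite ((Submodule.span (ZMod p) (w '' {l : Fin n | (l : ℕ) < j - 1}) :
          Submodule (ZMod p) K) : Set K)).toFinset, (X - C a);
      let Wj : K := (Polynomial.eval (w ⟨j - 1, by omega⟩) Pj1) ^ (p - 1);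
      Pj = Pj1 ^ p - C Wj * Pj1 ∧
      Wj = ∏ a ∈ (Set.toFinite ((Submodule.span (ZMod p)
          (w '' {l : Fin n | (l : ℕ) < j - 1}) : Submodule (ZMod p) K) : Set K)).toFinset,
        (w ⟨j - 1, by omega⟩ - a) ^ (p - 1) ∧
      Wj ^ q = Wj := by
  intro j hj1 hjn
  intro Pj Pj1 Wj
  haveI : Fact p.Prime := ⟨hp⟩
  haveI : NeZero p := ⟨hp.ne_zero⟩
  haveI hchar : CharP K p := charP_of_injective_algebraMap (algebraMap (ZMod p) K).injective p
  have hjn' : j - 1 < n := by omega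
  set ω : K := w ⟨j - 1, hjn'⟩ with hωdef
  set V : Submodule (ZMod p) K :=
    Submodule.span (ZMod p) (w '' {l : Fin n | (l : ℕ) < j - 1}) with hVdef
  set S1 : Finset K := (Set.toFinite (V : Set K)).toFinset with hS1
  have hPj1 : Pj1 = ∏ a ∈ S1, (X - C a) := rfl
  have hWj : Wj = (Polynomial.eval ω Pj1) ^ (p - 1) := rfl
  have hmem : ∀ a : K, a ∈ S1 ↔ a ∈ V := fun a => Set.Finite.mem_toFinset _
  -- span decomposition
  have hidx : {l : Fin n | (l : ℕ) < j}
      = {l : Fin n | (l : ℕ) < j - 1} ∪ {(⟨j - 1, hjn'⟩ : Fin n)} := by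
    ext l
    simp only [Set.mem_setOf_eq, Set.mem_union, Set.mem_singleton_iff]
    constructor
    · intro h
      rcases lt_or_ge (l : ℕ) (j - 1) with h' | h'
      · exact Or.inl h'
      · exact Or.inr (Fin.ext (show (l : ℕ) = j - 1 by omega))
    · rintro (h | rfl)
      · omega
      · show j - 1 < j; omega
  have himg : w '' {l : Fin n | (l : ℕ) < j} = w '' {l : Fin n | (l : ℕ) < j - 1} ∪ {ω} := by
    rw [hidx, Set.image_union, Set.image_singleton, hωdef]
  have hspan : Submodule.span (ZMod p) (w '' {l : Fin n | (l : ℕ) < j})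
      = V ⊔ Submodule.span (ZMod p) {ω} := by
    rw [himg, Submodule.span_union, hVdef]
  have hωV : ω ∉ V := by
    rw [hVdef, hωdef]
    exact hwind.notMem_span_image (by simp)
  refine ⟨?_, ?_, ?_⟩
  · -- first conjunct
    rw [hWj, hPj1]
    have hPj : Pj = ∏ a ∈ (Set.toFinite
        (((V ⊔ Submodule.span (ZMod p) {ω} : Submodule (ZMod p) K)) : Set K)).toFinset,
        (X - C a) := by
      have hset : ((Submodule.span (ZMod p) (w '' {l : Fin n | (l : ℕ) < j}) :
          Submodule (ZMod p) K) : Set K)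
          = ((V ⊔ Submodule.span (ZMod p) {ω} : Submodule (ZMod p) K) : Set K) := by
        rw [hspan]
      exact Finset.prod_congr
        ((Set.Finite.toFinset_inj (hs := Set.toFinite _) (ht := Set.toFinite _)).mpr hset)
        (fun _ _ => rfl)
    rw [hPj]
    exact main_id p hp V (Set.toFinite _) ω hωV (Set.toFinite _)
  · rw [hWj, hPj1, prodlin_eval, ← Finset.prod_pow]
  · rw [hWj, hPj1, prodlin_eval]
    have hqsub : ∀ x y : K, (x - y) ^ q = x ^ q - y ^ q := by
      subst hq; intro x y; exact sub_pow_char_pow x y n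
    have hroot1 : ω ^ q = -ω := eq_neg_of_add_eq_zero_left (hwroot _)
    have hrootS : ∀ a ∈ S1, a ^ q = -a := by
      intro a ha
      have h1 : a ∈ Submodule.span (ZMod p) (Set.range w) :=
        Submodule.span_mono (Set.image_subset_range w _) ((hmem a).mp ha)
      have h2 : a ∈ {α : K | α ^ q + α = 0} := by rw [← hwspan]; exact h1
      exact eq_neg_of_add_eq_zero_left h2
    set θ : K := ∏ a ∈ S1, (ω - a) with hθ
    have hθq : θ ^ q = (-1 : K) ^ S1.card * θ := by
      have hfac : ∀ a ∈ S1, (ω - a) ^ q = (-1 : K) * (ω - a) := by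
        intro a ha; rw [hqsub ω a, hroot1, hrootS a ha]; ring
      rw [hθ, ← Finset.prod_pow, Finset.prod_congr rfl hfac, Finset.prod_mul_distrib,
        Finset.prod_const]
    have hneg : ((-1 : K)) ^ (p - 1) = 1 := by
      rcases hp.eq_two_or_odd' with h2 | hodd
      · subst h2
        have h20 : (2 : K) = 0 := by exact_mod_cast CharP.cast_eq_zero K 2
        have hm : (-1 : K) = 1 := by linear_combination -h20
        rw [hm, one_pow]
      · exact (Nat.Odd.sub_odd hodd odd_one).neg_one_pow
    calc (θ ^ (p - 1)) ^ q = (θ ^ q) ^ (p - 1) := by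
          rw [← pow_mul, ← pow_mul, Nat.mul_comm]
      _ = ((-1 : K) ^ S1.card * θ) ^ (p - 1) := by rw [hθq]
      _ = (((-1 : K)) ^ (p - 1)) ^ S1.card * θ ^ (p - 1) := by
          rw [mul_pow, ← pow_mul, ← pow_mul, Nat.mul_comm]
      _ = θ ^ (p - 1) := by rw [hneg, one_pow, one_mul]
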